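/- arXiv:1604.08606 — 4 statements merged into one kernel-verified Lean document; each statement's English description precedes it below -/
import Mathlib

section
/- Let μ be a finite Borel measure on [0,∞) and define φ(λ) = μ((0,λ]). If ∫_{(0,u₀]} |log t| dμ(t) < ∞ for some u₀ ∈ (0,1), then the function ε ↦ ε⁻¹ φ(ε^{1/4}) is integrable on (0, u₀⁴]. -/
open MeasureTheory Set

/-- If μ is a finite Borel measure supported on [0,∞), φ(λ)=μ((0,λ]), and
∫_{(0,u₀]} |log t| dμ(t) < ∞ for some u₀ ∈ (0,1), then ε ↦ ε⁻¹ φ(ε^{1/4}) is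
integrable on (0, u₀⁴]. -/
theorem stmt0 (μ : Measure ℝ) [IsFiniteMeasure μ] (hsupp : μ (Iio 0) = 0)
    (u₀ : ℝ) (hu₀ : u₀ ∈ Ioo (0 : ℝ) 1)
    (hlog : IntegrableOn (fun t => |Real.log t|) (Ioc 0 u₀) μ) :
    IntegrableOn (fun ε => ε⁻¹ * (μ (Ioc 0 (ε ^ ((1 : ℝ) / 4)))).toReal)
      (Ioc 0 (u₀ ^ 4)) volume := by
  obtain ⟨hu0, hu1⟩ := hu₀
  set c : ℝ := u₀ ^ 4 with hc
  have hcpos : 0 < c := by positivity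
  have hcq : c ^ ((1:ℝ)/4) = u₀ := by
    rw [hc, ← Real.rpow_natCast u₀ 4, ← Real.rpow_mul hu0.le]
    norm_num
  have hrpow_cont : Continuous fun x : ℝ => x ^ ((1:ℝ)/4) :=
    Real.continuous_rpow_const (by norm_num)
  -- measurability of the function
  have hψ : Measurable fun x : ℝ => μ (Ioc 0 x) :=
    Monotone.measurable (fun a b hab => measure_mono (Ioc_subset_Ioc_right hab))
  have hmeas : Measurable fun ε : ℝ => ε⁻¹ * (μ (Ioc 0 (ε ^ ((1:ℝ)/4)))).toReal :=
    measurable_inv.mul ((hψ.comp hrpow_cont.measurable).ennreal_toReal)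
  refine ⟨(hmeas.aestronglyMeasurable).restrict, ?_⟩
  rw [hasFiniteIntegral_iff_norm]
  -- reduce to a lintegral bound
  have hkey : ∫⁻ ε in Ioc 0 c, ENNReal.ofReal ε⁻¹ * μ (Ioc 0 (ε ^ ((1:ℝ)/4))) < ⊤ := by
    -- the double-integral form
    set F : ℝ → ℝ → ENNReal := fun ε t =>
      ({p : ℝ × ℝ | 0 < p.2 ∧ p.2 ≤ p.1 ^ ((1:ℝ)/4)}.indicator
        (fun p => ENNReal.ofReal p.1⁻¹)) (ε, t) with hF
    have hSmeas : MeasurableSet {p : ℝ × ℝ | 0 < p.2 ∧ p.2 ≤ p.1 ^ ((1:ℝ)/4)} := by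
      apply MeasurableSet.inter
      · exact measurableSet_lt measurable_const measurable_snd
      · exact measurableSet_le measurable_snd
          (hrpow_cont.measurable.comp measurable_fst)
    have hFmeas : Measurable (Function.uncurry F) := by
      have : Function.uncurry F =
          ({p : ℝ × ℝ | 0 < p.2 ∧ p.2 ≤ p.1 ^ ((1:ℝ)/4)}.indicator
            (fun p => ENNReal.ofReal p.1⁻¹)) := rfl
      rw [this]
      exact (measurable_fst.inv.ennreal_ofReal).indicator hSmeas
    have hstep1 : ∀ ε ∈ Ioc (0:ℝ) c,
        ENNReal.ofReal ε⁻¹ * μ (Ioc 0 (ε ^ ((1:ℝ)/4))) = ∫⁻ t, F ε t ∂μ := by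
      intro ε hε
      have : ∀ t : ℝ, F ε t = (Ioc (0:ℝ) (ε ^ ((1:ℝ)/4))).indicator
          (fun _ => ENNReal.ofReal ε⁻¹) t := by
        intro t
        by_cases h : t ∈ Ioc (0:ℝ) (ε ^ ((1:ℝ)/4))
        · rw [indicator_of_mem h]
          exact indicator_of_mem (show (ε, t) ∈ {p : ℝ × ℝ | 0 < p.2 ∧ p.2 ≤ p.1 ^ ((1:ℝ)/4)}
            from ⟨h.1, h.2⟩) _
        · rw [indicator_of_notMem h]
          exact indicator_of_notMem (fun hm => h ⟨hm.1, hm.2⟩) _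
      simp_rw [this]
      rw [lintegral_indicator measurableSet_Ioc, setLIntegral_const, mul_comm]
    have hswap : ∫⁻ ε in Ioc 0 c, ∫⁻ t, F ε t ∂μ ∂volume
        = ∫⁻ t, ∫⁻ ε in Ioc 0 c, F ε t ∂volume ∂μ :=
      lintegral_lintegral_swap (hFmeas.aemeasurable)
    -- bound the inner integral for each t
    have hinner : ∀ t : ℝ, ∫⁻ ε in Ioc 0 c, F ε t ∂volume ≤
        (Ioc (0:ℝ) u₀).indicator
          (fun t => ENNReal.ofReal (4 * |Real.log t| + 4 * |Real.log u₀|)) t := by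
      intro t
      by_cases ht : t ∈ Ioc (0:ℝ) u₀
      · rw [indicator_of_mem ht]
        obtain ⟨ht0, htu⟩ := ht
        have ht4 : t ^ 4 ≤ c := by
          rw [hc]; gcongr
        -- on Ioc 0 c, F ε t ≤ indicator (Icc (t^4) c) (fun ε => ofReal ε⁻¹)
        have hb : ∀ ε ∈ Ioc (0:ℝ) c, F ε t ≤
            (Icc (t^4) c).indicator (fun ε => ENNReal.ofReal ε⁻¹) ε := by
          intro ε hε
          by_cases h : (ε, t) ∈ {p : ℝ × ℝ | 0 < p.2 ∧ p.2 ≤ p.1 ^ ((1:ℝ)/4)}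
          · rw [show F ε t = ENNReal.ofReal ε⁻¹ from indicator_of_mem h _]
            have hεt : t ^ 4 ≤ ε := by
              have h1 : t ^ 4 ≤ (ε ^ ((1:ℝ)/4)) ^ 4 :=
                pow_le_pow_left₀ h.1.le h.2 4
              have h2 : (ε ^ ((1:ℝ)/4)) ^ 4 = ε := by
                rw [← Real.rpow_natCast (ε ^ ((1:ℝ)/4)) 4, ← Real.rpow_mul hε.1.le]
                norm_num
              linarith
            rw [indicator_of_mem (show ε ∈ Icc (t^4) c from ⟨hεt, hε.2⟩)]
          · rw [show F ε t = 0 from indicator_of_notMem h _]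
            exact zero_le
        calc ∫⁻ ε in Ioc 0 c, F ε t ∂volume
            ≤ ∫⁻ ε in Ioc 0 c,
                (Icc (t^4) c).indicator (fun ε => ENNReal.ofReal ε⁻¹) ε ∂volume := by
              apply setLIntegral_mono' measurableSet_Ioc hb
          _ ≤ ∫⁻ ε, (Icc (t^4) c).indicator (fun ε => ENNReal.ofReal ε⁻¹) ε ∂volume :=
              setLIntegral_le_lintegral _ _
          _ = ∫⁻ ε in Icc (t^4) c, ENNReal.ofReal ε⁻¹ ∂volume := by
              rw [lintegral_indicator measurableSet_Icc]
          _ ≤ ENNReal.ofReal (4 * |Real.log t| + 4 * |Real.log u₀|) := by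
              have ht4pos : (0:ℝ) < t ^ 4 := by positivity
              have hint : IntegrableOn (fun ε : ℝ => ε⁻¹) (Icc (t^4) c) volume :=
                ContinuousOn.integrableOn_compact' isCompact_Icc measurableSet_Icc
                  (ContinuousOn.inv₀ continuousOn_id
                    (fun x hx => ne_of_gt (lt_of_lt_of_le ht4pos hx.1)))
              rw [← ofReal_integral_eq_lintegral_ofReal hint]
              · apply ENNReal.ofReal_le_ofReal
                rw [MeasureTheory.integral_Icc_eq_integral_Ioc]
                rw [← intervalIntegral.integral_of_le ht4]
                rw [integral_inv_of_pos ht4pos hcpos]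
                rw [Real.log_div (ne_of_gt hcpos) (ne_of_gt ht4pos), hc,
                  Real.log_pow, Real.log_pow]
                have h1 : Real.log u₀ ≤ |Real.log u₀| := le_abs_self _
                have h2 : -Real.log t ≤ |Real.log t| := neg_le_abs _
                push_cast
                linarith
              · filter_upwards [self_mem_ae_restrict measurableSet_Icc] with x hx
                exact inv_nonneg.mpr (le_of_lt (lt_of_lt_of_le ht4pos hx.1))
      · rw [indicator_of_notMem ht]
        have : ∀ ε ∈ Ioc (0:ℝ) c, F ε t = 0 := by
          intro ε hε
          simp only [hF, indicator]
          rw [if_neg]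
          rintro ⟨h1, h2⟩
          apply ht
          refine ⟨h1, le_trans h2 ?_⟩
          rw [← hcq]
          exact Real.rpow_le_rpow hε.1.le hε.2 (by norm_num)
        calc ∫⁻ ε in Ioc 0 c, F ε t ∂volume
            = ∫⁻ ε in Ioc 0 c, 0 ∂volume :=
              setLIntegral_congr_fun measurableSet_Ioc this
          _ = 0 := lintegral_zero
          _ ≤ 0 := le_rfl
    -- put it together
    calc ∫⁻ ε in Ioc 0 c, ENNReal.ofReal ε⁻¹ * μ (Ioc 0 (ε ^ ((1:ℝ)/4)))
        = ∫⁻ ε in Ioc 0 c, ∫⁻ t, F ε t ∂μ ∂volume :=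
          setLIntegral_congr_fun measurableSet_Ioc hstep1
      _ = ∫⁻ t, ∫⁻ ε in Ioc 0 c, F ε t ∂volume ∂μ := hswap
      _ ≤ ∫⁻ t, (Ioc (0:ℝ) u₀).indicator
            (fun t => ENNReal.ofReal (4 * |Real.log t| + 4 * |Real.log u₀|)) t ∂μ :=
          lintegral_mono hinner
      _ = ∫⁻ t in Ioc 0 u₀, ENNReal.ofReal (4 * |Real.log t| + 4 * |Real.log u₀|) ∂μ :=
          lintegral_indicator measurableSet_Ioc _
      _ ≤ ∫⁻ t in Ioc 0 u₀, ENNReal.ofReal (4 * |Real.log t|)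
            + ENNReal.ofReal (4 * |Real.log u₀|) ∂μ := by
          apply lintegral_mono
          intro t
          exact ENNReal.ofReal_add_le
      _ < ⊤ := by
          rw [lintegral_add_right _ measurable_const]
          apply ENNReal.add_lt_top.mpr
          constructor
          · have := hlog.2
            rw [hasFiniteIntegral_iff_norm] at this
            calc ∫⁻ t in Ioc 0 u₀, ENNReal.ofReal (4 * |Real.log t|) ∂μ
                = ∫⁻ t in Ioc 0 u₀, 4 * ENNReal.ofReal |Real.log t| ∂μ := by
                  apply lintegral_congr; intro t
                  rw [ENNReal.ofReal_mul (by norm_num)]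
                  norm_num
              _ = 4 * ∫⁻ t in Ioc 0 u₀, ENNReal.ofReal |Real.log t| ∂μ :=
                  lintegral_const_mul' 4 _ (by norm_num)
              _ < ⊤ := by
                  apply ENNReal.mul_lt_top (by norm_num)
                  simpa only [Real.norm_eq_abs, abs_abs] using this
          · rw [setLIntegral_const]
            exact ENNReal.mul_lt_top ENNReal.ofReal_lt_top (measure_lt_top μ _)
  -- transfer back
  calc ∫⁻ ε in Ioc 0 c, ENNReal.ofReal ‖ε⁻¹ * (μ (Ioc 0 (ε ^ ((1:ℝ)/4)))).toReal‖ ∂volume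
      ≤ ∫⁻ ε in Ioc 0 c, ENNReal.ofReal ε⁻¹ * μ (Ioc 0 (ε ^ ((1:ℝ)/4))) ∂volume := by
        apply setLIntegral_mono' measurableSet_Ioc
        intro ε hε
        rw [Real.norm_eq_abs, abs_mul, abs_of_nonneg (inv_nonneg.mpr hε.1.le),
          abs_of_nonneg ENNReal.toReal_nonneg,
          ENNReal.ofReal_mul (inv_nonneg.mpr hε.1.le),
          ENNReal.ofReal_toReal (measure_ne_top μ _)]
    _ < ⊤ := hkey
end

section
/- Let μ be a finite Borel measure on [0,∞), φ(u) = μ((0,u]), and 0 < u₀ < 1. Then ∫_{(0,u₀]} u⁻¹ φ(u) du ≤ ∫_{(0,u₀]} |log t| dμ(t) + φ(u₀)|log u₀| + limsup_{δ→0⁺} |log δ| φ(δ), whenever the right-hand side is finite. -/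
open MeasureTheory Set Filter
open scoped ENNReal

private lemma stmt2_key (μ : Measure ℝ) [IsFiniteMeasure μ] (u₀ : ℝ) (hu₀ : u₀ ∈ Ioo (0:ℝ) 1) :
    (∫⁻ u in Ioc 0 u₀, μ (Ioc 0 u) / ENNReal.ofReal u)
      ≤ ∫⁻ t in Ioc 0 u₀, ENNReal.ofReal |Real.log t| ∂μ := by
  set F : ℝ → ℝ → ℝ≥0∞ := fun u t => (Ioc 0 u).indicator (fun _ => (ENNReal.ofReal u)⁻¹) t with hF
  have h1 : ∀ u : ℝ, μ (Ioc 0 u) / ENNReal.ofReal u = ∫⁻ t, F u t ∂μ := by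
    intro u
    rw [div_eq_mul_inv, ← lintegral_indicator_one measurableSet_Ioc,
      ← lintegral_mul_const _ (measurable_one.indicator measurableSet_Ioc)]
    simp [hF, Set.indicator]
  have hswap : (∫⁻ u in Ioc 0 u₀, ∫⁻ t, F u t ∂μ)
      = ∫⁻ t, (∫⁻ u in Ioc 0 u₀, F u t) ∂μ := by
    apply lintegral_lintegral_swap
    apply Measurable.aemeasurable
    have : Function.uncurry F = fun p : ℝ × ℝ =>
        ({q : ℝ × ℝ | 0 < q.2 ∧ q.2 ≤ q.1}).indicator (fun q => (ENNReal.ofReal q.1)⁻¹) p := by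
      funext p
      simp only [Function.uncurry, hF, Set.indicator, mem_Ioc, mem_setOf_eq]
    rw [this]
    exact Measurable.indicator (by measurability)
      ((measurableSet_lt measurable_const measurable_snd).inter
        (measurableSet_le measurable_snd measurable_fst))
  have hbound : ∀ t : ℝ, (∫⁻ u in Ioc 0 u₀, F u t)
      ≤ (Ioc 0 u₀).indicator (fun t => ENNReal.ofReal |Real.log t|) t := by
    intro t
    by_cases ht : t ∈ Ioc 0 u₀
    · obtain ⟨ht0, htu⟩ := ht
      have heq : ∀ u ∈ Ioc (0:ℝ) u₀, F u t = (Ici t).indicator (fun u => (ENNReal.ofReal u)⁻¹) u := by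
        intro u hu
        simp only [hF, Set.indicator, mem_Ioc, mem_Ici]
        by_cases h : t ≤ u <;> simp [h, ht0]
      have hset : Ici t ∩ Ioc 0 u₀ = Icc t u₀ := by
        ext x
        simp only [mem_inter_iff, mem_Ici, mem_Ioc, mem_Icc]
        exact ⟨fun ⟨a, _, c⟩ => ⟨a, c⟩, fun ⟨a, b⟩ => ⟨a, ht0.trans_le a, b⟩⟩
      have hint : IntegrableOn (fun u : ℝ => u⁻¹) (Ioc t u₀) := by
        refine ((continuousOn_id.inv₀ fun x hx => ?_).integrableOn_Icc).mono_set Ioc_subset_Icc_self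
        exact ne_of_gt (lt_of_lt_of_le ht0 hx.1)
      have hlog : Real.log (u₀ / t) ≤ |Real.log t| := by
        rw [Real.log_div (ne_of_gt hu₀.1) (ne_of_gt ht0)]
        have h1 := Real.log_nonpos hu₀.1.le hu₀.2.le
        have h2 := neg_le_abs (Real.log t)
        linarith
      calc (∫⁻ u in Ioc 0 u₀, F u t)
          = ∫⁻ u in Ioc 0 u₀, (Ici t).indicator (fun u => (ENNReal.ofReal u)⁻¹) u :=
            setLIntegral_congr_fun measurableSet_Ioc heq
        _ = ∫⁻ u in Ici t ∩ Ioc 0 u₀, (ENNReal.ofReal u)⁻¹ := by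
            rw [lintegral_indicator measurableSet_Ici, Measure.restrict_restrict measurableSet_Ici]
        _ = ∫⁻ u in Ioc t u₀, (ENNReal.ofReal u)⁻¹ := by
            rw [hset]; exact setLIntegral_congr Ioc_ae_eq_Icc.symm
        _ = ∫⁻ u in Ioc t u₀, ENNReal.ofReal u⁻¹ :=
            setLIntegral_congr_fun measurableSet_Ioc (fun u hu =>
              (ENNReal.ofReal_inv_of_pos (ht0.trans hu.1)).symm)
        _ = ENNReal.ofReal (∫ u in Ioc t u₀, u⁻¹) := by
            rw [ofReal_integral_eq_lintegral_ofReal hint ((ae_restrict_iff' measurableSet_Ioc).mpr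
              (ae_of_all _ fun u hu => inv_nonneg.2 (ht0.trans hu.1).le))]
        _ = ENNReal.ofReal (Real.log (u₀ / t)) := by
            rw [← intervalIntegral.integral_of_le htu, integral_inv]
            rw [uIcc_of_le htu]
            exact fun h => absurd h.1 (not_le.mpr ht0)
        _ ≤ ENNReal.ofReal |Real.log t| := ENNReal.ofReal_le_ofReal hlog
        _ = (Ioc 0 u₀).indicator (fun t => ENNReal.ofReal |Real.log t|) t := by
            rw [Set.indicator_of_mem (show t ∈ Ioc (0:ℝ) u₀ from ⟨ht0, htu⟩)]
    · have h0 : ∀ u ∈ Ioc (0:ℝ) u₀, F u t = 0 := by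
        intro u hu
        simp only [hF, Set.indicator_apply_eq_zero, mem_Ioc]
        intro hmem
        exact absurd ⟨hmem.1, hmem.2.trans hu.2⟩ ht
      rw [setLIntegral_congr_fun measurableSet_Ioc h0, lintegral_zero]
      exact zero_le
  calc (∫⁻ u in Ioc 0 u₀, μ (Ioc 0 u) / ENNReal.ofReal u)
      = ∫⁻ u in Ioc 0 u₀, ∫⁻ t, F u t ∂μ := by simp_rw [h1]
    _ = ∫⁻ t, (∫⁻ u in Ioc 0 u₀, F u t) ∂μ := hswap
    _ ≤ ∫⁻ t, (Ioc 0 u₀).indicator (fun t => ENNReal.ofReal |Real.log t|) t ∂μ :=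
        lintegral_mono hbound
    _ = ∫⁻ t in Ioc 0 u₀, ENNReal.ofReal |Real.log t| ∂μ :=
        lintegral_indicator measurableSet_Ioc _

/-- For a finite Borel measure μ supported on [0,∞), φ(u) = μ((0,u]) and
0 < u₀ < 1, one has
∫_{(0,u₀]} u⁻¹ φ(u) du ≤ ∫_{(0,u₀]} |log t| dμ(t) + φ(u₀)|log u₀| + limsup_{δ→0⁺} |log δ| φ(δ),
whenever the right-hand side is finite. -/
theorem stmt2 (μ : Measure ℝ) [IsFiniteMeasure μ] (hsupp : μ (Iio 0) = 0)
    (u₀ : ℝ) (hu₀ : u₀ ∈ Ioo (0 : ℝ) 1)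
    (hfin : (∫⁻ t in Ioc 0 u₀, ENNReal.ofReal |Real.log t| ∂μ)
        + μ (Ioc 0 u₀) * ENNReal.ofReal |Real.log u₀|
        + Filter.limsup (fun δ : ℝ => ENNReal.ofReal |Real.log δ| * μ (Ioc 0 δ))
            (nhdsWithin 0 (Ioi 0)) ≠ ⊤) :
    (∫⁻ u in Ioc 0 u₀, μ (Ioc 0 u) / ENNReal.ofReal u)
      ≤ (∫⁻ t in Ioc 0 u₀, ENNReal.ofReal |Real.log t| ∂μ)
        + μ (Ioc 0 u₀) * ENNReal.ofReal |Real.log u₀|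
        + Filter.limsup (fun δ : ℝ => ENNReal.ofReal |Real.log δ| * μ (Ioc 0 δ))
            (nhdsWithin 0 (Ioi 0)) :=
  (stmt2_key μ u₀ hu₀).trans (le_add_right (le_add_right le_rfl))
end

section
/- Let H be a Hilbert space, Q a bounded positive operator on H, ξ, S, ζ ∈ H vectors, and λ > 0. Suppose Q ξ = c · Q S + ζ for a scalar c > 0, with ‖ζ‖ ≤ M and ‖P_λ S‖ ≤ N where P_λ = χ_{[λ,∞)}(Q). Then ‖ξ‖² ≥ c² ‖P_λ S‖² − 2 c λ⁻¹ M N. -/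
open Set

/-- Let Q be a bounded positive operator on a Hilbert space H (with Borel
functional calculus encoded by Φ as in the truncated-inverse construction), ξ, S, ζ ∈ H,
λ > 0, and suppose Q ξ = c • Q S + ζ with c > 0, ‖ζ‖ ≤ M and ‖P_λ S‖ ≤ N where
P_λ = χ_{[λ,∞)}(Q).  Then ‖ξ‖² ≥ c² ‖P_λ S‖² − 2 c λ⁻¹ M N. -/
theorem stmt6 {H : Type*} [NormedAddCommGroup H] [InnerProductSpace ℂ H]
    [CompleteSpace H] (Q : H →L[ℂ] H)
    (hQsa : IsSelfAdjoint Q) (hQpos : ∀ x : H, 0 ≤ (inner ℂ (Q x) x : ℂ).re)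
    (Φ : (ℝ → ℂ) →⋆ₐ[ℂ] (H →L[ℂ] H))
    (hΦid : Φ (fun x : ℝ => (x : ℂ)) = Q)
    (hΦnorm : ∀ (f : ℝ → ℂ) (c : ℝ), (∀ x : ℝ, (x : ℂ) ∈ spectrum ℂ Q → ‖f x‖ ≤ c) →
      ‖Φ f‖ ≤ c)
    (l : ℝ) (hl : 0 < l)
    (P : H →L[ℂ] H) (hP : P = Φ (fun x : ℝ => if l ≤ x then (1 : ℂ) else 0))
    (ξ S ζ : H) (c M N : ℝ) (hc : 0 < c)
    (heq : Q ξ = c • Q S + ζ) (hζ : ‖ζ‖ ≤ M) (hPS : ‖P S‖ ≤ N) :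
    ‖ξ‖ ^ 2 ≥ c ^ 2 * ‖P S‖ ^ 2 - 2 * c * l⁻¹ * M * N := by
  set R : H →L[ℂ] H := Φ (fun x : ℝ => if l ≤ x then (x : ℂ)⁻¹ else 0) with hR
  have hRQ : R * Q = P := by
    rw [hP, hR, ← hΦid, ← map_mul]
    congr 1
    funext x
    by_cases hx : l ≤ x
    · have hx0 : (x : ℂ) ≠ 0 := by
        exact_mod_cast ne_of_gt (lt_of_lt_of_le hl hx)
      simp [Pi.mul_apply, hx, inv_mul_cancel₀ hx0]
    · simp [Pi.mul_apply, hx]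
  have hPnorm : ‖P‖ ≤ 1 := by
    rw [hP]
    refine hΦnorm _ 1 (fun x _ => ?_)
    by_cases hx : l ≤ x <;> simp [hx]
  have hRnorm : ‖R‖ ≤ l⁻¹ := by
    refine hΦnorm _ l⁻¹ (fun x _ => ?_)
    by_cases hx : l ≤ x
    · simp only [hx, if_true]
      rw [norm_inv, Complex.norm_real, Real.norm_eq_abs,
        abs_of_pos (lt_of_lt_of_le hl hx)]
      exact inv_anti₀ hl hx
    · simp [hx, le_of_lt (inv_pos.mpr hl)]
  have hPξ : P ξ = c • P S + R ζ := by
    have h1 : P ξ = R (Q ξ) := by rw [← hRQ]; rfl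
    have h2 : P S = R (Q S) := by rw [← hRQ]; rfl
    rw [h1, heq, map_add, h2]
    congr 1
    exact R.map_smul_of_tower c (Q S)
  have h3 : ‖P ξ‖ ≤ ‖ξ‖ := by
    calc ‖P ξ‖ ≤ ‖P‖ * ‖ξ‖ := P.le_opNorm ξ
    _ ≤ 1 * ‖ξ‖ := by
        exact mul_le_mul_of_nonneg_right hPnorm (norm_nonneg _)
    _ = ‖ξ‖ := one_mul _
  have h4 : c * ‖P S‖ - ‖R ζ‖ ≤ ‖P ξ‖ := by
    have := norm_sub_norm_le (c • P S) (-(R ζ))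
    simp only [sub_neg_eq_add, norm_neg, norm_smul] at this
    rw [Real.norm_eq_abs, abs_of_pos hc] at this
    rw [hPξ]
    linarith [this]
  have h5 : ‖R ζ‖ ≤ l⁻¹ * M := by
    calc ‖R ζ‖ ≤ ‖R‖ * ‖ζ‖ := R.le_opNorm ζ
    _ ≤ l⁻¹ * M := by
        apply mul_le_mul hRnorm hζ (norm_nonneg _) (le_of_lt (inv_pos.mpr hl))
  have hl' : (0:ℝ) < l⁻¹ := inv_pos.mpr hl
  have hM : (0:ℝ) ≤ M := le_trans (norm_nonneg _) hζ
  have hN : (0:ℝ) ≤ N := le_trans (norm_nonneg _) hPS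
  have h6 : ‖P S‖ * ‖R ζ‖ ≤ N * (l⁻¹ * M) :=
    mul_le_mul hPS h5 (norm_nonneg _) hN
  rcases le_or_gt (c * ‖P S‖) ‖R ζ‖ with hcase | hcase
  · have h7 : c * ‖P S‖ ≤ l⁻¹ * M := le_trans hcase h5
    have h8 : c * ‖P S‖ ≤ c * N := mul_le_mul_of_nonneg_left hPS hc.le
    have h9 : (c * ‖P S‖) * (c * ‖P S‖) ≤ (l⁻¹ * M) * (c * N) :=
      mul_le_mul h7 h8 (by positivity) (by positivity)
    nlinarith [sq_nonneg ‖ξ‖, mul_nonneg (mul_nonneg (mul_nonneg hc.le hl'.le) hM) hN]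
  · have h7 : (0:ℝ) ≤ c * ‖P S‖ - ‖R ζ‖ := le_of_lt (sub_pos.mpr hcase)
    have h8 : c * ‖P S‖ - ‖R ζ‖ ≤ ‖ξ‖ := le_trans h4 h3
    have h9 := mul_self_le_mul_self h7 h8
    nlinarith [mul_le_mul_of_nonneg_left h6 hc.le, mul_self_nonneg ‖R ζ‖]
end

section
/- Let A be a complex *-algebra generated by elements X₁,…,X_n, V a bimodule over A, and F₁,…,F_k noncommutative polynomials with F_i(X) = 0 in A and with A ≅ ℂ⟨t₁,…,t_n⟩ / (ideal generated by the F_i). Then the map δ ↦ (δ(X₁),…,δ(X_n)) is a linear isomorphism from the space of derivations Der(A, V) onto {(Q₁,…,Q_n) ∈ Vⁿ : Σ_j ∂_j F_i(X) # Q_j = 0 for all i}, provided each F_i acts as zero on both sides of V. -/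
open TensorProduct MulOpposite

/-- The action (a⊗b)#v = a·v·b of A ⊗ A on an A-bimodule V, extended linearly. -/
noncomputable def bimodAct {A V : Type*} [Ring A] [Algebra ℂ A]
    [AddCommGroup V] [Module ℂ V] [Module A V] [Module Aᵐᵒᵖ V]
    [IsScalarTower ℂ A V] [IsScalarTower ℂ Aᵐᵒᵖ V] [SMulCommClass ℂ A V]
    (v : V) : A ⊗[ℂ] A →ₗ[ℂ] V :=
  TensorProduct.lift (LinearMap.mk₂ ℂ (fun a b => a • (op b • v))
    (fun a a' b => by simp [add_smul])
    (fun c a b => by simp [smul_assoc])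
    (fun a b b' => by simp [op_add, add_smul, smul_add])
    (fun c a b => by
      try dsimp only
      rw [op_smul, smul_assoc, smul_comm]))

section aux
set_option linter.unusedSectionVars false
variable {A V : Type*} [Ring A] [Algebra ℂ A]
    [AddCommGroup V] [Module ℂ V] [Module A V] [Module Aᵐᵒᵖ V]
    [SMulCommClass A Aᵐᵒᵖ V] [IsScalarTower ℂ A V] [IsScalarTower ℂ Aᵐᵒᵖ V]
    [SMulCommClass ℂ A V]

lemma bimodAct_tmul (v : V) (a b : A) :
    bimodAct v (a ⊗ₜ[ℂ] b) = a • (op b • v) := rfl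

lemma bimodAct_mul_one_tmul (v : V) (x : A ⊗[ℂ] A) (b : A) :
    bimodAct v (x * ((1:A) ⊗ₜ[ℂ] b)) = op b • bimodAct v x := by
  induction x using TensorProduct.induction_on with
  | zero => simp
  | tmul p q =>
      rw [Algebra.TensorProduct.tmul_mul_tmul, mul_one, bimodAct_tmul, bimodAct_tmul,
        op_mul, mul_smul, smul_comm]
  | add x y hx hy => rw [add_mul, map_add, hx, hy, map_add, smul_add]

lemma bimodAct_tmul_one_mul (v : V) (x : A ⊗[ℂ] A) (a : A) :
    bimodAct v ((a ⊗ₜ[ℂ] (1:A)) * x) = a • bimodAct v x := by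
  induction x using TensorProduct.induction_on with
  | zero => simp
  | tmul p q =>
      rw [Algebra.TensorProduct.tmul_mul_tmul, one_mul, bimodAct_tmul, bimodAct_tmul,
        mul_smul]
  | add x y hx hy => rw [mul_add, map_add, hx, hy, map_add, smul_add]

variable {n : ℕ} (π : FreeAlgebra ℂ (Fin n) →ₐ[ℂ] A)
    (D : Fin n →
      (FreeAlgebra ℂ (Fin n) →ₗ[ℂ] FreeAlgebra ℂ (Fin n) ⊗[ℂ] FreeAlgebra ℂ (Fin n)))
    (hLeibD : ∀ (j : Fin n) (a b : FreeAlgebra ℂ (Fin n)),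
      D j (a * b) = D j a * (1 ⊗ₜ[ℂ] b) + (a ⊗ₜ[ℂ] 1) * D j b)
    (hgen : ∀ j i : Fin n,
      D j (FreeAlgebra.ι ℂ i)
        = if i = j then (1 : FreeAlgebra ℂ (Fin n)) ⊗ₜ[ℂ] 1 else 0)

include hLeibD in
lemma Phi_leibniz (Q : Fin n → V) (a b : FreeAlgebra ℂ (Fin n)) :
    ∑ j, bimodAct (Q j) ((Algebra.TensorProduct.map π π) (D j (a * b)))
      = π a • ∑ j, bimodAct (Q j) ((Algebra.TensorProduct.map π π) (D j b))
        + op (π b) • ∑ j, bimodAct (Q j) ((Algebra.TensorProduct.map π π) (D j a)) := by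
  simp only [hLeibD, map_add, map_mul, Algebra.TensorProduct.map_tmul, map_one,
    bimodAct_mul_one_tmul, bimodAct_tmul_one_mul, Finset.sum_add_distrib, Finset.smul_sum]
  rw [add_comm]

include hLeibD in
lemma D_one (j : Fin n) : D j (1 : FreeAlgebra ℂ (Fin n)) = 0 := by
  have h := hLeibD j 1 1
  rw [mul_one, ← Algebra.TensorProduct.one_def, mul_one, one_mul] at h
  exact right_eq_add.mp h

include hgen in
lemma Phi_gen (Q : Fin n → V) (i : Fin n) :
    ∑ j, bimodAct (Q j) ((Algebra.TensorProduct.map π π) (D j (FreeAlgebra.ι ℂ i)))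
      = Q i := by
  simp [hgen, apply_ite, bimodAct_tmul, Finset.sum_ite_eq,
    Algebra.TensorProduct.one_def]

include hLeibD in
lemma Phi_algebraMap (Q : Fin n → V) (r : ℂ) :
    ∑ j, bimodAct (Q j)
      ((Algebra.TensorProduct.map π π) (D j (algebraMap ℂ (FreeAlgebra ℂ (Fin n)) r)))
      = 0 := by
  have h : ∀ j, D j (algebraMap ℂ (FreeAlgebra ℂ (Fin n)) r) = 0 := fun j => by
    rw [Algebra.algebraMap_eq_smul_one, map_smul, D_one D hLeibD j, smul_zero]
  simp [h]

end aux

/-- Let A be a complex algebra generated by X₁,…,X_n, presented as the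
quotient of ℂ⟨t₁,…,t_n⟩ by the two-sided ideal generated by F₁,…,F_k (via the
surjection π, t_j ↦ X_j), with F_i(X) = 0 in A, and let V be an A-bimodule on which
each F_i(X) acts as zero on both sides.  Then δ ↦ (δ(X₁),…,δ(X_n)) is a linear
bijection from the derivations Der(A,V) onto
{(Q₁,…,Q_n) ∈ Vⁿ : Σ_j ∂_jF_i(X) # Q_j = 0 for all i}. -/
theorem stmt16 {n k : ℕ} {A V : Type*} [Ring A] [Algebra ℂ A]
    [AddCommGroup V] [Module ℂ V] [Module A V] [Module Aᵐᵒᵖ V]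
    [SMulCommClass A Aᵐᵒᵖ V] [IsScalarTower ℂ A V] [IsScalarTower ℂ Aᵐᵒᵖ V]
    [SMulCommClass ℂ A V]
    (X : Fin n → A) (π : FreeAlgebra ℂ (Fin n) →ₐ[ℂ] A)
    (hπsurj : Function.Surjective π) (hπι : ∀ j, π (FreeAlgebra.ι ℂ j) = X j)
    (F : Fin k → FreeAlgebra ℂ (Fin n)) (hFX : ∀ i, π (F i) = 0)
    (hker : ∀ a : FreeAlgebra ℂ (Fin n), π a = 0 ↔
      a ∈ AddSubgroup.closure
        {x : FreeAlgebra ℂ (Fin n) | ∃ a' b' i, x = a' * F i * b'})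
    (D : Fin n →
      (FreeAlgebra ℂ (Fin n) →ₗ[ℂ] FreeAlgebra ℂ (Fin n) ⊗[ℂ] FreeAlgebra ℂ (Fin n)))
    (hLeibD : ∀ (j : Fin n) (a b : FreeAlgebra ℂ (Fin n)),
      D j (a * b) = D j a * (1 ⊗ₜ[ℂ] b) + (a ⊗ₜ[ℂ] 1) * D j b)
    (hgen : ∀ j i : Fin n,
      D j (FreeAlgebra.ι ℂ i)
        = if i = j then (1 : FreeAlgebra ℂ (Fin n)) ⊗ₜ[ℂ] 1 else 0) :
    (∀ δ : A →ₗ[ℂ] V, (∀ a b : A, δ (a * b) = a • δ b + op b • δ a) →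
      ∀ i : Fin k,
        ∑ j : Fin n, bimodAct (δ (X j)) ((Algebra.TensorProduct.map π π) (D j (F i)))
          = 0) ∧
    (∀ Q : Fin n → V,
      (∀ i : Fin k,
        ∑ j : Fin n, bimodAct (Q j) ((Algebra.TensorProduct.map π π) (D j (F i))) = 0) →
      ∃! δ : A →ₗ[ℂ] V,
        (∀ a b : A, δ (a * b) = a • δ b + op b • δ a) ∧ ∀ j, δ (X j) = Q j) := by
  constructor
  · intro δ hδ i
    have hδ1 : δ (1 : A) = 0 := by
      have h := hδ 1 1
      rw [mul_one, one_smul, op_one, one_smul] at h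
      exact right_eq_add.mp h
    have key : ∀ a : FreeAlgebra ℂ (Fin n),
        ∑ j, bimodAct (δ (X j)) ((Algebra.TensorProduct.map π π) (D j a)) = δ (π a) := by
      intro a
      induction a using FreeAlgebra.induction with
      | grade0 r =>
          rw [Phi_algebraMap π D hLeibD, AlgHom.commutes,
            Algebra.algebraMap_eq_smul_one, map_smul, hδ1, smul_zero]
      | grade1 x =>
          rw [Phi_gen π D hgen, hπι]
      | mul a b ha hb =>
          rw [Phi_leibniz π D hLeibD, ha, hb, map_mul, hδ]
      | add a b ha hb =>
          simp only [map_add, Finset.sum_add_distrib, ha, hb]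
    rw [key (F i), hFX i, map_zero]
  · intro Q hQ
    set ΦL : FreeAlgebra ℂ (Fin n) →ₗ[ℂ] V :=
      ∑ j, (bimodAct (Q j)).comp
        ((Algebra.TensorProduct.map π π).toLinearMap.comp (D j)) with hΦLdef
    have hΦL : ∀ a, ΦL a = ∑ j, bimodAct (Q j) ((Algebra.TensorProduct.map π π) (D j a)) := by
      intro a
      simp only [hΦLdef, LinearMap.sum_apply, LinearMap.comp_apply, AlgHom.toLinearMap_apply]
    have hΦLF : ∀ i, ΦL (F i) = 0 := fun i => by rw [hΦL]; exact hQ i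
    have hΦmul : ∀ a b, ΦL (a * b) = π a • ΦL b + op (π b) • ΦL a := by
      intro a b
      rw [hΦL, hΦL, hΦL]
      exact Phi_leibniz π D hLeibD Q a b
    have hker0 : ∀ a, π a = 0 → ΦL a = 0 := by
      intro a ha
      rw [hker] at ha
      refine AddSubgroup.closure_induction (p := fun x _ => ΦL x = 0) ?_ ?_ ?_ ?_ ha
      · rintro x ⟨a', b', i, rfl⟩
        rw [hΦmul (a' * F i) b', hΦmul a' (F i), hΦLF i, smul_zero, zero_add,
          map_mul, hFX i, mul_zero, zero_smul, zero_add, op_zero, zero_smul,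
          smul_zero]
      · exact map_zero ΦL
      · intro x y _ _ hx hy
        rw [map_add, hx, hy, add_zero]
      · intro x _ hx
        rw [map_neg, hx, neg_zero]
    obtain ⟨g, hg⟩ := π.toLinearMap.exists_rightInverse_of_surjective
      (LinearMap.range_eq_top.2 hπsurj)
    have hδπ : ∀ a, (ΦL.comp g) (π a) = ΦL a := by
      intro a
      have h1 : π (g (π a)) = π a := DFunLike.congr_fun hg (π a)
      have h0 : ΦL (g (π a) - a) = 0 := hker0 _ (by rw [map_sub, h1, sub_self])
      rw [map_sub, sub_eq_zero] at h0
      exact h0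
    have hδmul : ∀ a b : A, (ΦL.comp g) (a * b)
        = a • (ΦL.comp g) b + op b • (ΦL.comp g) a := by
      intro a b
      obtain ⟨x, rfl⟩ := hπsurj a
      obtain ⟨y, rfl⟩ := hπsurj b
      rw [← map_mul, hδπ, hδπ, hδπ, hΦmul]
    have hδval : ∀ j, (ΦL.comp g) (X j) = Q j := by
      intro j
      rw [← hπι j, hδπ, hΦL]
      exact Phi_gen π D hgen Q j
    refine ⟨ΦL.comp g, ⟨hδmul, hδval⟩, ?_⟩
    rintro δ' ⟨hLeib', hval'⟩
    have hδ'1 : δ' (1 : A) = 0 := by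
      have h := hLeib' 1 1
      rw [mul_one, one_smul, op_one, one_smul] at h
      exact right_eq_add.mp h
    have key : ∀ a : FreeAlgebra ℂ (Fin n), δ' (π a) = ΦL a := by
      intro a
      induction a using FreeAlgebra.induction with
      | grade0 r =>
          rw [hΦL, Phi_algebraMap π D hLeibD, AlgHom.commutes,
            Algebra.algebraMap_eq_smul_one, map_smul, hδ'1, smul_zero]
      | grade1 x =>
          rw [hπι, hval', hΦL, Phi_gen π D hgen]
      | mul a b ha hb =>
          rw [map_mul, hLeib', ha, hb, hΦmul]
      | add a b ha hb =>
          rw [map_add, map_add, map_add, ha, hb]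
    ext x
    obtain ⟨a, rfl⟩ := hπsurj x
    exact (key a).trans (hδπ a).symm
end
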